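/- arXiv:2507.06505 — 2 statements merged into one kernel-verified Lean document; each statement's English description precedes it below -/
import Mathlib

section
/- Assume the upper Weyl bound Σ_{k=1}^N φ_k(x)² ≤ c₂ N for all x ∈ Ω, and assume there are points x_1, …, x_M ∈ Ω with M ≥ 2 and a constant A ≥ 1 such that ‖P‖_∞ ≤ A · max_{1≤j≤M} |P(x_j)| for every P in the linear span of φ_1, …, φ_N. Then there is a constant C depending only on A and c₂ such that E[‖P_a‖_∞ / ‖P_a‖_2] ≤ C (ln M)^{1/2}. (Upper bound in the average Nikolskii factor N^{ave}_{2,∞}(𝒫_n) ≍ √(ln n).) -/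
open MeasureTheory MeasureTheory.Measure ProbabilityTheory Real
open scoped ENNReal NNReal

/-- The law of a random vector with `N` independent standard Gaussian `N(0,1)` coordinates. -/
noncomputable def stdGaussian (N : ℕ) : Measure (Fin N → ℝ) :=
  Measure.pi fun _ => gaussianReal 0 1

section aux

-- 1D gaussian transfer
lemma gauss_integral_eq (g : ℝ → ℝ) :
    ∫ x, g x ∂(gaussianReal 0 1) = ∫ x, gaussianPDFReal 0 1 x * g x := by
  rw [gaussianReal_of_var_ne_zero 0 one_ne_zero]
  have h : (gaussianPDF 0 1) = fun x => ((gaussianPDFReal 0 1 x).toNNReal : ℝ≥0∞) := by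
    ext x; simp [gaussianPDF, ENNReal.ofReal]
  rw [h, integral_withDensity_eq_integral_smul
    ((measurable_gaussianPDFReal 0 1).real_toNNReal) g]
  congr 1; ext x
  simp [NNReal.smul_def, Real.coe_toNNReal _ (gaussianPDFReal_nonneg 0 1 x)]

lemma gauss_integrable_iff (g : ℝ → ℝ) :
    Integrable g (gaussianReal 0 1) ↔
      Integrable (fun x => gaussianPDFReal 0 1 x * g x) volume := by
  rw [gaussianReal_of_var_ne_zero 0 one_ne_zero]
  have h : (gaussianPDF 0 1) = fun x => ((gaussianPDFReal 0 1 x).toNNReal : ℝ≥0∞) := by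
    ext x; simp [gaussianPDF, ENNReal.ofReal]
  rw [h, integrable_withDensity_iff_integrable_coe_smul
    ((measurable_gaussianPDFReal 0 1).real_toNNReal)]
  constructor <;> intro hh <;> refine hh.congr (Filter.Eventually.of_forall fun x => ?_) <;>
    simp [NNReal.smul_def, Real.coe_toNNReal _ (gaussianPDFReal_nonneg 0 1 x)]

lemma gauss_pdf_eq (x : ℝ) :
    gaussianPDFReal 0 1 x = (Real.sqrt (2 * π))⁻¹ * Real.exp (-(1/2) * x ^ 2) := by
  rw [gaussianPDFReal]
  norm_num
  left
  ring

lemma key_id (c x : ℝ) :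
    gaussianPDFReal 0 1 x * Real.exp (c * x)
      = (Real.sqrt (2 * π))⁻¹ * Real.exp (c^2/2) * Real.exp (-(1/2) * (x - c)^2) := by
  rw [gauss_pdf_eq, mul_assoc, ← Real.exp_add, mul_assoc, ← Real.exp_add]
  ring_nf

lemma gauss_mgf_integrable (c : ℝ) :
    Integrable (fun x => Real.exp (c * x)) (gaussianReal 0 1) := by
  rw [gauss_integrable_iff]
  have : Integrable (fun x : ℝ => Real.exp (-(1/2) * (x - c)^2)) volume :=
    (integrable_exp_neg_mul_sq (by norm_num : (0:ℝ) < 1/2)).comp_sub_right c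
  exact (this.const_mul _).congr (Filter.Eventually.of_forall fun x => (key_id c x).symm)

lemma gauss_mgf (c : ℝ) :
    ∫ x, Real.exp (c * x) ∂(gaussianReal 0 1) = Real.exp (c^2/2) := by
  rw [gauss_integral_eq]
  simp_rw [key_id]
  rw [integral_const_mul, integral_sub_right_eq_self (fun x => Real.exp (-(1/2) * x^2)) c,
    integral_gaussian]
  have h2π : Real.sqrt (2*π) ≠ 0 := by positivity
  rw [show π / (1/2) = 2 * π by ring]
  field_simp

lemma gauss_sq_id (x : ℝ) :
    gaussianPDFReal 0 1 x * Real.exp (-(3/2) * x^2)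
      = (Real.sqrt (2 * π))⁻¹ * Real.exp (-2 * x^2) := by
  rw [gauss_pdf_eq, mul_assoc, ← Real.exp_add]
  ring_nf

lemma gauss_sq_integrable :
    Integrable (fun x => Real.exp (-(3/2) * x^2)) (gaussianReal 0 1) := by
  rw [gauss_integrable_iff]
  exact ((integrable_exp_neg_mul_sq (by norm_num : (0:ℝ) < 2)).const_mul _).congr
    (Filter.Eventually.of_forall fun x => (gauss_sq_id x).symm)

lemma gauss_sq : ∫ x, Real.exp (-(3/2) * x^2) ∂(gaussianReal 0 1) = 1/2 := by
  rw [gauss_integral_eq]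
  simp_rw [gauss_sq_id]
  rw [integral_const_mul, integral_gaussian]
  have h1 : Real.sqrt (π/2) = Real.sqrt (2*π) / 2 := by
    rw [show π/2 = (2*π)/2^2 by ring, Real.sqrt_div (by positivity) (2^2),
      Real.sqrt_sq (by norm_num : (0:ℝ) ≤ 2)]
  rw [h1]
  have h2π : Real.sqrt (2*π) ≠ 0 := by positivity
  field_simp


theorem my_integrable_prod {n : ℕ} (μ : Measure ℝ) [IsProbabilityMeasure μ]
    {f : Fin n → ℝ → ℝ} (hf : ∀ i, Integrable (f i) μ) :
    Integrable (fun x : Fin n → ℝ => ∏ i, f i (x i)) (Measure.pi fun _ => μ) := by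
  induction n with
  | zero => simpa using integrable_const (1 : ℝ)
  | succ n n_ih =>
      have := ((measurePreserving_piFinSuccAbove (fun _ : Fin (n+1) => μ) 0).symm)
      rw [← this.integrable_comp_emb (MeasurableEquiv.measurableEmbedding _)]
      simp_rw [MeasurableEquiv.piFinSuccAbove_symm_apply, Fin.insertNthEquiv,
        Fin.prod_univ_succ, Fin.insertNth_zero]
      simp only [Fin.zero_succAbove, Function.comp_def, Fin.cons_zero, Fin.cons_succ,
        Equiv.coe_fn_mk]
      have h2 : Integrable (fun (x : Fin n → ℝ) ↦ ∏ j, f (Fin.succ j) (x j))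
          (Measure.pi fun _ => μ) := n_ih (fun i ↦ hf _)
      exact Integrable.mul_prod (hf 0) h2

theorem my_integral_prod {n : ℕ} (μ : Measure ℝ) [IsProbabilityMeasure μ]
    (f : Fin n → ℝ → ℝ) :
    ∫ x : Fin n → ℝ, ∏ i, f i (x i) ∂(Measure.pi fun _ => μ) = ∏ i, ∫ x, f i x ∂μ := by
  induction n with
  | zero => simp
  | succ n n_ih =>
      calc
        _ = ∫ x : ℝ × (Fin n → ℝ),
            f 0 x.1 * ∏ i : Fin n, f (Fin.succ i) (x.2 i) ∂(μ.prod (Measure.pi fun _ => μ)) := by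
          rw [← ((measurePreserving_piFinSuccAbove
            (fun _ : Fin (n+1) => μ) 0).symm).integral_comp']
          simp_rw [MeasurableEquiv.piFinSuccAbove_symm_apply, Fin.insertNthEquiv,
            Fin.prod_univ_succ, Fin.insertNth_zero, Equiv.coe_fn_mk]
          simp [Fin.zero_succAbove]
        _ = (∫ x, f 0 x ∂μ) * ∏ i : Fin n, ∫ (x : ℝ), f (Fin.succ i) x ∂μ := by
          rw [← n_ih, ← integral_prod_mul]
        _ = ∏ i, ∫ x, f i x ∂μ := by rw [Fin.prod_univ_succ]
instance stdGaussian_prob (N : ℕ) : IsProbabilityMeasure (stdGaussian N) := by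
  unfold _root_.stdGaussian; infer_instance



lemma exp_sum_eq {N : ℕ} (c a : Fin N → ℝ) :
    Real.exp (∑ k, c k * a k) = ∏ k, Real.exp (c k * a k) := Real.exp_sum _ _

lemma std_mgf_integrable {N : ℕ} (c : Fin N → ℝ) :
    Integrable (fun a => Real.exp (∑ k, c k * a k)) (stdGaussian N) := by
  simp_rw [exp_sum_eq]
  exact my_integrable_prod _ (fun k => gauss_mgf_integrable (c k))

lemma std_mgf {N : ℕ} (c : Fin N → ℝ) :
    ∫ a, Real.exp (∑ k, c k * a k) ∂(stdGaussian N)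
      = Real.exp ((∑ k, (c k)^2) / 2) := by
  simp_rw [exp_sum_eq]
  rw [show stdGaussian N = Measure.pi fun _ => gaussianReal 0 1 from rfl,
    my_integral_prod _ (fun k => fun x => Real.exp (c k * x))]
  simp_rw [gauss_mgf, ← Real.exp_sum, Finset.sum_div]

lemma std_chi_integrable {N : ℕ} :
    Integrable (fun a : Fin N → ℝ => ∏ k, Real.exp (-(3/2) * (a k)^2))
      (stdGaussian N) :=
  my_integrable_prod _ (fun _ => gauss_sq_integrable)

lemma std_chi {N : ℕ} :
    ∫ a : Fin N → ℝ, ∏ k, Real.exp (-(3/2) * (a k)^2) ∂(stdGaussian N)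
      = (1/2 : ℝ)^N := by
  rw [show stdGaussian N = Measure.pi fun _ => gaussianReal 0 1 from rfl,
    my_integral_prod _ (fun _ => fun x => Real.exp (-(3/2) * x^2))]
  rw [Finset.prod_const]
  norm_num
  rw [show (fun x => rexp (-(3 / 2 * x ^ 2))) = fun x => rexp (-(3/2) * x ^ 2) by
    funext x; ring_nf, gauss_sq]

lemma l2_norm_eq {Ω : Type} [MeasurableSpace Ω] (μ : Measure Ω) [IsProbabilityMeasure μ]
    {N : ℕ} (φ : Fin N → Ω → ℝ)
    (hmeas : ∀ k, Measurable (φ k))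
    (hbd : ∀ k, ∃ B : ℝ, ∀ x, |φ k x| ≤ B)
    (horth : ∀ i j, (∫ x, φ i x * φ j x ∂μ) = if i = j then (1 : ℝ) else 0)
    (a : Fin N → ℝ) :
    ∫ x, |∑ k, a k * φ k x| ^ (2 : ℝ) ∂μ = ∑ k, (a k)^2 := by
  have hint : ∀ i j, Integrable (fun x => φ i x * φ j x) μ := by
    intro i j
    obtain ⟨Bi, hBi⟩ := hbd i
    obtain ⟨Bj, hBj⟩ := hbd j
    refine Integrable.mono' (integrable_const (Bi * Bj))
      (((hmeas i).mul (hmeas j)).aestronglyMeasurable)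
      (Filter.Eventually.of_forall fun x => ?_)
    rw [norm_mul, Real.norm_eq_abs, Real.norm_eq_abs]
    exact mul_le_mul (hBi x) (hBj x) (abs_nonneg _) ((abs_nonneg _).trans (hBi x))
  have h1 : ∀ x : Ω, |∑ k, a k * φ k x| ^ (2:ℝ)
      = ∑ i, ∑ j, (a i * a j) * (φ i x * φ j x) := by
    intro x
    rw [show (2:ℝ) = ((2:ℕ):ℝ) by norm_num, Real.rpow_natCast, sq_abs,
      sq, Finset.sum_mul_sum]
    apply Finset.sum_congr rfl; intro i _
    apply Finset.sum_congr rfl; intro j _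
    ring
  simp_rw [h1]
  rw [integral_finset_sum _ (fun i _ => integrable_finset_sum _
    (fun j _ => ((hint i j).const_mul _)))]
  have h2 : ∀ i ∈ Finset.univ, (∫ x, ∑ j, (a i * a j) * (φ i x * φ j x) ∂μ)
      = a i ^ 2 := by
    intro i _
    rw [integral_finset_sum _ (fun j _ => ((hint i j).const_mul _))]
    have : ∀ j ∈ Finset.univ, (∫ x, (a i * a j) * (φ i x * φ j x) ∂μ)
        = a i * a j * (if i = j then (1:ℝ) else 0) := by
      intro j _
      rw [MeasureTheory.integral_const_mul, horth i j]
    rw [Finset.sum_congr rfl this]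
    simp [sq]
  rw [Finset.sum_congr rfl h2]

end aux

/-- sup of |P_a| over a type -/
noncomputable def supAbs {N : ℕ} {Ω : Type} (φ : Fin N → Ω → ℝ) (a : Fin N → ℝ) : ℝ :=
  ⨆ x, |∑ k, a k * φ k x|

lemma supAbs_nonneg {N : ℕ} {Ω : Type} (φ : Fin N → Ω → ℝ) (a : Fin N → ℝ) :
    0 ≤ supAbs φ a := Real.iSup_nonneg fun _ => abs_nonneg _

set_option maxHeartbeats 2000000 in
/-- under the upper Weyl bound and a Marcinkiewicz–Zygmund type hypothesis
with `M` points and constant `A`, one has `E[‖P_a‖_∞ / ‖P_a‖_2] ≤ C √(ln M)` with `C`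
depending only on `A` and `c₂`. -/
theorem average_nikolskii_two_infty_upper (A c₂ : ℝ) (hA : 1 ≤ A) (hc₂ : 0 < c₂) :
    ∃ C : ℝ, 0 < C ∧
      ∀ (Ω : Type) [MeasurableSpace Ω] (μ : Measure Ω) [IsProbabilityMeasure μ]
        (N : ℕ), 1 ≤ N →
        ∀ φ : Fin N → Ω → ℝ,
          (∀ k, Measurable (φ k)) →
          (∀ k, ∃ B : ℝ, ∀ x, |φ k x| ≤ B) →
          (∀ i j, (∫ x, φ i x * φ j x ∂μ) = if i = j then (1 : ℝ) else 0) →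
          (∀ x, ∑ k, φ k x ^ 2 ≤ c₂ * N) →
          ∀ (M : ℕ), 2 ≤ M →
          ∀ xs : Fin M → Ω,
            (∀ b : Fin N → ℝ,
              (⨆ x, |∑ k, b k * φ k x|) ≤ A * ⨆ j, |∑ k, b k * φ k (xs j)|) →
            (∫ a, (⨆ x, |∑ k, a k * φ k x|) /
                (∫ x, |∑ k, a k * φ k x| ^ (2 : ℝ) ∂μ) ^ ((1 : ℝ) / 2)
              ∂(stdGaussian N)) ≤ C * Real.sqrt (Real.log M) := by
  classical
  have hsc : (0:ℝ) ≤ Real.sqrt c₂ := Real.sqrt_nonneg _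
  have hA0 : (0:ℝ) < A := lt_of_lt_of_le one_pos hA
  refine ⟨8*A*Real.sqrt c₂ + 3*Real.sqrt c₂ + 1, by nlinarith, ?_⟩
  intro Ω _ μ _ N hN φ hmeas hbd horth hweyl M hM xs hMZ
  have hNpos : (0:ℝ) < N := by exact_mod_cast Nat.lt_of_lt_of_le Nat.zero_lt_one hN
  have hMR : (2:ℝ) ≤ M := by exact_mod_cast hM
  have hM0 : (0:ℝ) < M := by linarith
  have hlog2lb : (0.6931471803:ℝ) < Real.log 2 := Real.log_two_gt_d9
  have hlog2ub : Real.log 2 < 0.6931471808 := Real.log_two_lt_d9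
  set L := Real.log (M:ℝ) with hLdef
  have hL2 : Real.log 2 ≤ L := Real.log_le_log (by norm_num) hMR
  have hL0 : (0:ℝ) < L := by linarith
  have hcN : (0:ℝ) < c₂ * N := by positivity
  set σ := Real.sqrt (c₂ * N) with hσdef
  have hσ : 0 < σ := Real.sqrt_pos.mpr hcN
  set t := Real.sqrt (2*L) / σ with htdef
  have h2L : (0:ℝ) < 2*L := by linarith
  have ht : 0 < t := div_pos (Real.sqrt_pos.mpr h2L) hσ
  have hσ2 : σ^2 = c₂ * N := Real.sq_sqrt hcN.le
  have ht2 : t^2 * (c₂ * N) = 2*L := by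
    rw [htdef, div_pow, Real.sq_sqrt h2L.le, hσ2]
    field_simp
  set u := Real.log (2*(M:ℝ)^2) / t with hudef
  have hM2 : (0:ℝ) < 2*(M:ℝ)^2 := by positivity
  have htu : t * u = Real.log (2*(M:ℝ)^2) := by
    rw [hudef]; field_simp
  have hexpu : Real.exp (-(t*u)) = (2*(M:ℝ)^2)⁻¹ := by
    rw [htu, Real.exp_neg, Real.exp_log hM2]
  have hNop : Nonempty Ω := by
    by_contra h
    rw [not_nonempty_iff] at h
    have h1 : μ Set.univ = 1 := measure_univ
    rw [Set.univ_eq_empty_iff.mpr h, measure_empty] at h1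
    exact zero_ne_one h1
  have hMne : Nonempty (Fin M) := ⟨⟨0, by omega⟩⟩
  -- Cauchy-Schwarz pointwise
  have hCS : ∀ (a : Fin N → ℝ) (x : Ω),
      |∑ k, a k * φ k x| ≤ Real.sqrt (∑ k, (a k)^2) * σ := by
    intro a x
    have h1 := Finset.sum_mul_sq_le_sq_mul_sq Finset.univ a (fun k => φ k x)
    have h2 : (∑ k, a k * φ k x)^2 ≤ (∑ k, (a k)^2) * (c₂ * N) := by
      refine le_trans h1 (mul_le_mul_of_nonneg_left (hweyl x)
        (Finset.sum_nonneg fun k _ => sq_nonneg _))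
    calc |∑ k, a k * φ k x| = Real.sqrt ((∑ k, a k * φ k x)^2) :=
          (Real.sqrt_sq_eq_abs _).symm
      _ ≤ Real.sqrt ((∑ k, (a k)^2) * (c₂ * N)) := Real.sqrt_le_sqrt h2
      _ = Real.sqrt (∑ k, (a k)^2) * σ :=
          Real.sqrt_mul (Finset.sum_nonneg fun k _ => sq_nonneg _) _
  have hSle : ∀ a : Fin N → ℝ, supAbs φ a ≤ Real.sqrt (∑ k, (a k)^2) * σ :=
    fun a => ciSup_le fun x => hCS a x
  -- rewrite the integral
  have hden : ∀ a : Fin N → ℝ,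
      (∫ x, |∑ k, a k * φ k x| ^ (2:ℝ) ∂μ) ^ ((1:ℝ)/2) = Real.sqrt (∑ k, (a k)^2) := by
    intro a
    rw [l2_norm_eq μ φ hmeas hbd horth a]
    exact (Real.sqrt_eq_rpow _).symm
  have hrw : (∫ a, (⨆ x, |∑ k, a k * φ k x|) /
        (∫ x, |∑ k, a k * φ k x| ^ (2 : ℝ) ∂μ) ^ ((1 : ℝ) / 2) ∂(stdGaussian N))
      = ∫ a, supAbs φ a / Real.sqrt (∑ k, (a k)^2) ∂(stdGaussian N) := by
    apply integral_congr_ae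
    apply Filter.Eventually.of_forall
    intro a
    beta_reduce
    rw [hden a]
    rfl
  rw [hrw]
  -- the dominating function
  set Y : (Fin N → ℝ) → ℝ := fun a => supAbs (fun k (j : Fin M) => φ k (xs j)) a with hYdef
  have hY0 : ∀ a, 0 ≤ Y a := fun a => supAbs_nonneg _ a
  have hg : ∀ a : Fin N → ℝ, supAbs φ a / Real.sqrt (∑ k, (a k)^2)
      ≤ (2*A/Real.sqrt N) * Y a + σ * Real.exp ((3/2) * (N/4 - ∑ k, (a k)^2)) := by
    intro a
    have hr0 : (0:ℝ) ≤ Real.sqrt (∑ k, (a k)^2) := Real.sqrt_nonneg _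
    have hsum0 : (0:ℝ) ≤ ∑ k, (a k)^2 := Finset.sum_nonneg fun k _ => sq_nonneg _
    have hsq : Real.sqrt (∑ k, (a k)^2) ^ 2 = ∑ k, (a k)^2 := Real.sq_sqrt hsum0
    have hterm2 : 0 ≤ σ * Real.exp ((3/2) * ((N:ℝ)/4 - ∑ k, (a k)^2)) := by positivity
    have hterm1 : 0 ≤ (2*A/Real.sqrt N) * Y a :=
      mul_nonneg (div_nonneg (by linarith) (Real.sqrt_nonneg _)) (hY0 a)
    have hsN : (0:ℝ) < Real.sqrt N := Real.sqrt_pos.mpr hNpos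
    by_cases hcase : Real.sqrt (N:ℝ) / 2 ≤ Real.sqrt (∑ k, (a k)^2)
    · have hrpos : 0 < Real.sqrt (∑ k, (a k)^2) := lt_of_lt_of_le (by positivity) hcase
      have hS : supAbs φ a ≤ A * Y a := hMZ a
      calc supAbs φ a / Real.sqrt (∑ k, (a k)^2)
          ≤ (A * Y a) / (Real.sqrt (N:ℝ) / 2) := by
            exact div_le_div₀ (mul_nonneg hA0.le (hY0 a)) hS (by positivity) hcase
        _ = (2*A/Real.sqrt N) * Y a := by field_simp
        _ ≤ _ := le_add_of_nonneg_right hterm2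
    · push_neg at hcase
      have hlt : ∑ k, (a k)^2 < (N:ℝ)/4 := by
        have h4 : Real.sqrt (∑ k, (a k)^2) ^ 2 < (Real.sqrt (N:ℝ)/2)^2 := by
          apply pow_lt_pow_left₀ hcase hr0
          norm_num
        rw [hsq] at h4
        have h5 : (Real.sqrt (N:ℝ))^2 = (N:ℝ) := Real.sq_sqrt hNpos.le
        nlinarith
      have h1 : supAbs φ a / Real.sqrt (∑ k, (a k)^2) ≤ σ := by
        rcases eq_or_lt_of_le hr0 with h|h
        · rw [← h, div_zero]; exact hσ.le
        · rw [div_le_iff₀ h]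
          exact (hSle a).trans_eq (mul_comm _ _)
      have h2 : σ ≤ σ * Real.exp ((3/2) * ((N:ℝ)/4 - ∑ k, (a k)^2)) := by
        nth_rewrite 1 [← mul_one σ]
        refine mul_le_mul_of_nonneg_left ?_ hσ.le
        exact Real.one_le_exp (by linarith)
      linarith
  -- integrability and integral bounds for Y
  have hXmeas : ∀ j : Fin M, Measurable fun a : Fin N → ℝ => ∑ k, a k * φ k (xs j) :=
    fun j => Finset.measurable_sum _ (fun k _ => (measurable_pi_apply k).mul_const _)
  have hYmeas : Measurable Y := by
    rw [hYdef]
    unfold supAbs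
    exact Measurable.iSup (fun j => (hXmeas j).abs)
  have hdom : ∀ a : Fin N → ℝ, Y a ≤ u + t⁻¹ * (2*(M:ℝ)^2)⁻¹ *
      ∑ j, (Real.exp (∑ k, (t * φ k (xs j)) * a k)
        + Real.exp (∑ k, (-t * φ k (xs j)) * a k)) := by
    intro a
    apply ciSup_le
    intro j
    have e1 : (∑ k, (t * φ k (xs j)) * a k) = t * ∑ k, a k * φ k (xs j) := by
      rw [Finset.mul_sum]; exact Finset.sum_congr rfl fun k _ => by ring
    have e2 : (∑ k, (-t * φ k (xs j)) * a k) = -(t * ∑ k, a k * φ k (xs j)) := by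
      rw [Finset.mul_sum, ← Finset.sum_neg_distrib]
      exact Finset.sum_congr rfl fun k _ => by ring
    have key : |∑ k, a k * φ k (xs j)| ≤ u + t⁻¹ * (2*(M:ℝ)^2)⁻¹ *
        (Real.exp (t * ∑ k, a k * φ k (xs j))
          + Real.exp (-(t * ∑ k, a k * φ k (xs j)))) := by
      set X := ∑ k, a k * φ k (xs j) with hXd
      have h1 : t * (|X| - u) ≤ Real.exp (t * (|X| - u)) := by
        linarith [Real.add_one_le_exp (t * (|X| - u))]
      have h3 : Real.exp (t*|X|) ≤ Real.exp (t*X) + Real.exp (-(t*X)) := by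
        rcases abs_cases X with ⟨hx, _⟩ | ⟨hx, _⟩
        · rw [hx]; exact le_add_of_nonneg_right (Real.exp_pos _).le
        · rw [hx, mul_neg]; exact le_add_of_nonneg_left (Real.exp_pos _).le
      have h2 : Real.exp (t*(|X| - u)) = (2*(M:ℝ)^2)⁻¹ * Real.exp (t*|X|) := by
        rw [mul_sub, Real.exp_sub, div_eq_mul_inv, ← Real.exp_neg, hexpu, mul_comm]
      have h4 : |X| - u ≤ t⁻¹ * Real.exp (t*(|X| - u)) := by
        rw [inv_mul_eq_div, le_div_iff₀ ht]
        linarith [h1]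
      have h6 : t⁻¹ * ((2*(M:ℝ)^2)⁻¹ * Real.exp (t*|X|))
          ≤ t⁻¹ * ((2*(M:ℝ)^2)⁻¹ * (Real.exp (t*X) + Real.exp (-(t*X)))) := by
        refine mul_le_mul_of_nonneg_left ?_ (inv_nonneg.mpr ht.le)
        exact mul_le_mul_of_nonneg_left h3 (by positivity)
      calc |X| = u + (|X| - u) := by ring
        _ ≤ u + t⁻¹ * Real.exp (t*(|X|-u)) := by linarith
        _ = u + t⁻¹ * ((2*(M:ℝ)^2)⁻¹ * Real.exp (t*|X|)) := by rw [h2]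
        _ ≤ u + t⁻¹ * ((2*(M:ℝ)^2)⁻¹ * (Real.exp (t*X) + Real.exp (-(t*X)))) := by
            linarith
        _ = u + t⁻¹ * (2*(M:ℝ)^2)⁻¹ * (Real.exp (t*X) + Real.exp (-(t*X))) := by ring
    refine key.trans ?_
    have h7 : Real.exp (t * ∑ k, a k * φ k (xs j))
          + Real.exp (-(t * ∑ k, a k * φ k (xs j))) ≤
        ∑ j', (Real.exp (∑ k, (t * φ k (xs j')) * a k)
          + Real.exp (∑ k, (-t * φ k (xs j')) * a k)) := by
      have e3 : Real.exp (t * ∑ k, a k * φ k (xs j))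
            + Real.exp (-(t * ∑ k, a k * φ k (xs j)))
          = Real.exp (∑ k, (t * φ k (xs j)) * a k)
            + Real.exp (∑ k, (-t * φ k (xs j)) * a k) := by rw [e1, e2]
      rw [e3]
      exact Finset.single_le_sum
        (f := fun j' => Real.exp (∑ k, (t * φ k (xs j')) * a k)
          + Real.exp (∑ k, (-t * φ k (xs j')) * a k))
        (fun j' _ => by positivity) (Finset.mem_univ j)
    have h8 : (0:ℝ) ≤ t⁻¹ * (2*(M:ℝ)^2)⁻¹ := by positivity
    exact add_le_add (le_refl u) (mul_le_mul_of_nonneg_left h7 h8)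
  have hint1 : ∀ j : Fin M, Integrable (fun a : Fin N → ℝ =>
      Real.exp (∑ k, (t * φ k (xs j)) * a k)
        + Real.exp (∑ k, (-t * φ k (xs j)) * a k)) (stdGaussian N) :=
    fun j => (std_mgf_integrable _).add (std_mgf_integrable _)
  have hint2 : Integrable (fun a : Fin N → ℝ =>
      ∑ j, (Real.exp (∑ k, (t * φ k (xs j)) * a k)
        + Real.exp (∑ k, (-t * φ k (xs j)) * a k))) (stdGaussian N) :=
    integrable_finset_sum _ (fun j _ => hint1 j)
  have hhint : Integrable (fun a : Fin N → ℝ => u + t⁻¹ * (2*(M:ℝ)^2)⁻¹ *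
      ∑ j, (Real.exp (∑ k, (t * φ k (xs j)) * a k)
        + Real.exp (∑ k, (-t * φ k (xs j)) * a k))) (stdGaussian N) := by
    exact (integrable_const u).add (hint2.const_mul _)
  have hYint : Integrable Y (stdGaussian N) := by
    refine hhint.mono' hYmeas.aestronglyMeasurable (Filter.Eventually.of_forall fun a => ?_)
    rw [Real.norm_eq_abs, abs_of_nonneg (hY0 a)]
    exact hdom a
  have hIY : ∫ a, Y a ∂(stdGaussian N) ≤ u + t⁻¹ := by
    have h5 := integral_mono hYint hhint hdom
    have h6 : ∫ a : Fin N → ℝ, (u + t⁻¹ * (2*(M:ℝ)^2)⁻¹ *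
        ∑ j, (Real.exp (∑ k, (t * φ k (xs j)) * a k)
          + Real.exp (∑ k, (-t * φ k (xs j)) * a k))) ∂(stdGaussian N)
        = u + t⁻¹ * (2*(M:ℝ)^2)⁻¹ * ∑ j,
            (Real.exp ((∑ k, (t * φ k (xs j))^2)/2)
              + Real.exp ((∑ k, (-t * φ k (xs j))^2)/2)) := by
      rw [integral_add (integrable_const u) (hint2.const_mul _),
        integral_const, MeasureTheory.integral_const_mul,
        integral_finset_sum _ (fun j _ => hint1 j)]
      simp only [measure_univ, probReal_univ, ENNReal.toReal_one, smul_eq_mul, one_mul]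
      congr 1
      congr 1
      apply Finset.sum_congr rfl
      intro j _
      rw [integral_add (std_mgf_integrable _) (std_mgf_integrable _), std_mgf, std_mgf]
    have h7 : ∀ (c : Fin N → ℝ), (∑ k, (c k)^2 ≤ 2*L) →
        Real.exp ((∑ k, (c k)^2)/2) ≤ M := by
      intro c hc
      calc Real.exp ((∑ k, (c k)^2)/2) ≤ Real.exp L := Real.exp_le_exp.mpr (by linarith)
        _ = M := Real.exp_log hM0
    have hb1 : ∀ j : Fin M, ∑ k, (t * φ k (xs j))^2 ≤ 2*L := by
      intro j
      have hs : ∑ k, (t * φ k (xs j))^2 = t^2 * ∑ k, (φ k (xs j))^2 := by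
        rw [Finset.mul_sum]; exact Finset.sum_congr rfl fun k _ => by ring
      rw [hs, ← ht2]
      exact mul_le_mul_of_nonneg_left (hweyl (xs j)) (sq_nonneg t)
    have hb2 : ∀ j : Fin M, ∑ k, (-t * φ k (xs j))^2 ≤ 2*L := by
      intro j
      have hs : ∑ k, (-t * φ k (xs j))^2 = ∑ k, (t * φ k (xs j))^2 :=
        Finset.sum_congr rfl fun k _ => by ring
      rw [hs]; exact hb1 j
    have h8 : ∑ j, (Real.exp ((∑ k, (t * φ k (xs j))^2)/2)
          + Real.exp ((∑ k, (-t * φ k (xs j))^2)/2)) ≤ (M:ℝ) * (2*M) := by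
      calc ∑ j, (Real.exp ((∑ k, (t * φ k (xs j))^2)/2)
            + Real.exp ((∑ k, (-t * φ k (xs j))^2)/2))
          ≤ ∑ _j : Fin M, ((M:ℝ) + M) := Finset.sum_le_sum (fun j _ =>
            add_le_add (h7 _ (hb1 j)) (h7 _ (hb2 j)))
        _ = (M:ℝ) * (2*M) := by
            rw [Finset.sum_const, Finset.card_univ, Fintype.card_fin]
            push_cast; ring
    have h9 : t⁻¹ * (2*(M:ℝ)^2)⁻¹ * ((M:ℝ) * (2*M)) = t⁻¹ := by
      field_simp
    have h10 : t⁻¹ * (2*(M:ℝ)^2)⁻¹ * ∑ j,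
          (Real.exp ((∑ k, (t * φ k (xs j))^2)/2)
            + Real.exp ((∑ k, (-t * φ k (xs j))^2)/2)) ≤ t⁻¹ := by
      calc t⁻¹ * (2*(M:ℝ)^2)⁻¹ * ∑ j,
            (Real.exp ((∑ k, (t * φ k (xs j))^2)/2)
              + Real.exp ((∑ k, (-t * φ k (xs j))^2)/2))
          ≤ t⁻¹ * (2*(M:ℝ)^2)⁻¹ * ((M:ℝ) * (2*M)) :=
            mul_le_mul_of_nonneg_left h8
              (mul_nonneg (inv_nonneg.mpr ht.le) (by positivity))
        _ = t⁻¹ := h9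
    rw [h6] at h5
    linarith
  -- second term
  have hexpand : ∀ a : Fin N → ℝ, Real.exp ((3/2) * ((N:ℝ)/4 - ∑ k, (a k)^2))
      = Real.exp (3*(N:ℝ)/8) * ∏ k, Real.exp (-(3/2) * (a k)^2) := by
    intro a
    rw [← Real.exp_sum, ← Real.exp_add]
    congr 1
    have h : ∑ k, -(3/2) * (a k)^2 = -(3/2) * ∑ k, (a k)^2 := by rw [← Finset.mul_sum]
    rw [h]; ring
  have hterm2int : Integrable (fun a : Fin N → ℝ =>
      σ * Real.exp ((3/2) * ((N:ℝ)/4 - ∑ k, (a k)^2))) (stdGaussian N) := by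
    apply Integrable.congr ((std_chi_integrable (N := N)).const_mul
      (σ * Real.exp (3*(N:ℝ)/8)))
    apply Filter.Eventually.of_forall
    intro a
    beta_reduce
    rw [hexpand a]; ring
  have hterm2val : ∫ a : Fin N → ℝ,
      σ * Real.exp ((3/2) * ((N:ℝ)/4 - ∑ k, (a k)^2)) ∂(stdGaussian N)
      = σ * Real.exp (3*(N:ℝ)/8) * (1/2:ℝ)^N := by
    rw [show (fun a : Fin N → ℝ => σ * Real.exp ((3/2) * ((N:ℝ)/4 - ∑ k, (a k)^2)))
        = fun a : Fin N → ℝ => (σ * Real.exp (3*(N:ℝ)/8)) * ∏ k, Real.exp (-(3/2) * (a k)^2) by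
      funext a; rw [hexpand a]; ring]
    rw [MeasureTheory.integral_const_mul, std_chi]
  -- put together
  have hfint : ∫ a, supAbs φ a / Real.sqrt (∑ k, (a k)^2) ∂(stdGaussian N)
      ≤ (2*A/Real.sqrt N) * (u + t⁻¹) + σ * Real.exp (3*(N:ℝ)/8) * (1/2:ℝ)^N := by
    have hf0 : ∀ a : Fin N → ℝ, 0 ≤ supAbs φ a / Real.sqrt (∑ k, (a k)^2) :=
      fun a => div_nonneg (supAbs_nonneg _ _) (Real.sqrt_nonneg _)
    have hgint : Integrable (fun a : Fin N → ℝ => (2*A/Real.sqrt N) * Y a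
        + σ * Real.exp ((3/2) * ((N:ℝ)/4 - ∑ k, (a k)^2))) (stdGaussian N) :=
      (hYint.const_mul _).add hterm2int
    have hmono := integral_mono_of_nonneg (Filter.Eventually.of_forall hf0) hgint
      (Filter.Eventually.of_forall hg)
    have hval : ∫ a : Fin N → ℝ, ((2*A/Real.sqrt N) * Y a
          + σ * Real.exp ((3/2) * ((N:ℝ)/4 - ∑ k, (a k)^2))) ∂(stdGaussian N)
        = (2*A/Real.sqrt N) * (∫ a, Y a ∂(stdGaussian N))
          + σ * Real.exp (3*(N:ℝ)/8) * (1/2:ℝ)^N := by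
      rw [integral_add (hYint.const_mul _) hterm2int,
        MeasureTheory.integral_const_mul, hterm2val]
    have hc1 : (0:ℝ) ≤ 2*A/Real.sqrt N :=
      div_nonneg (by linarith) (Real.sqrt_nonneg _)
    have h11 : (2*A/Real.sqrt N) * (∫ a, Y a ∂(stdGaussian N))
        ≤ (2*A/Real.sqrt N) * (u + t⁻¹) := mul_le_mul_of_nonneg_left hIY hc1
    rw [hval] at hmono
    linarith
  -- numeric bounds
  have hB1 : (2*A/Real.sqrt N) * (u + t⁻¹) ≤ 8*A*Real.sqrt c₂ * Real.sqrt L := by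
    have hsqrt2 : (1.414:ℝ) ≤ Real.sqrt 2 := by
      nlinarith [Real.sq_sqrt (by norm_num : (0:ℝ) ≤ 2), Real.sqrt_nonneg 2]
    have hsqrt2' : (0:ℝ) < Real.sqrt 2 := by linarith
    have hs2L : Real.sqrt (2*L) = Real.sqrt 2 * Real.sqrt L := Real.sqrt_mul (by norm_num) L
    have hsLpos : 0 < Real.sqrt L := Real.sqrt_pos.mpr hL0
    have hσN : σ = Real.sqrt c₂ * Real.sqrt N := Real.sqrt_mul hc₂.le N
    have hsN : (0:ℝ) < Real.sqrt N := Real.sqrt_pos.mpr hNpos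
    have hsc0 : (0:ℝ) < Real.sqrt c₂ := Real.sqrt_pos.mpr hc₂
    have hlogM2 : Real.log (2*(M:ℝ)^2) = Real.log 2 + 2*L := by
      rw [Real.log_mul (by norm_num) (by positivity), Real.log_pow]
      push_cast; ring
    have hut : u + t⁻¹ = (Real.log 2 + 2*L + 1) * (σ / Real.sqrt (2*L)) := by
      rw [hudef, htdef, hlogM2, inv_div]
      have hs2Lpos : (0:ℝ) < Real.sqrt (2*L) := Real.sqrt_pos.mpr h2L
      field_simp
    have hkey : Real.log 2 + 2*L + 1 ≤ 4*Real.sqrt 2*L := by nlinarith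
    have hLL : Real.sqrt L * Real.sqrt L = L := Real.mul_self_sqrt hL0.le
    have hstep : (Real.log 2 + 2*L + 1) / (Real.sqrt 2 * Real.sqrt L)
        ≤ 4 * Real.sqrt L := by
      rw [div_le_iff₀ (by positivity)]
      nlinarith [hkey]
    calc (2*A/Real.sqrt N) * (u + t⁻¹)
        = 2*A*Real.sqrt c₂ * ((Real.log 2 + 2*L + 1) / (Real.sqrt 2 * Real.sqrt L)) := by
          rw [hut, hσN, hs2L]
          field_simp
      _ ≤ 2*A*Real.sqrt c₂ * (4 * Real.sqrt L) :=
          mul_le_mul_of_nonneg_left hstep (by positivity)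
      _ = 8*A*Real.sqrt c₂ * Real.sqrt L := by ring
  have hB2 : σ * Real.exp (3*(N:ℝ)/8) * (1/2:ℝ)^N ≤ 3*Real.sqrt c₂ * Real.sqrt L := by
    have hσN : σ = Real.sqrt c₂ * Real.sqrt N := Real.sqrt_mul hc₂.le N
    have h146 : Real.exp (3/8) ≤ 1.46 := by
      have h8 : Real.exp ((3:ℝ)/8)^8 = Real.exp 3 := by
        rw [← Real.exp_nat_mul]; norm_num
      have h3 : Real.exp (3:ℝ) = Real.exp 1^3 := by
        rw [← Real.exp_nat_mul]; norm_num
      have he : Real.exp 1 < 2.7182818286 := Real.exp_one_lt_d9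
      have h4 : Real.exp ((3:ℝ)/8)^8 < (1.46:ℝ)^8 := by
        rw [h8, h3]
        calc Real.exp 1^3 < (2.7182818286:ℝ)^3 :=
              pow_lt_pow_left₀ he (Real.exp_pos 1).le (by norm_num)
          _ < (1.46:ℝ)^8 := by norm_num
      exact le_of_lt (lt_of_pow_lt_pow_left₀ 8 (by norm_num) h4)
    have hexpN : Real.exp (3*(N:ℝ)/8) = Real.exp ((3:ℝ)/8)^N := by
      rw [← Real.exp_nat_mul]; congr 1; ring
    have hprod : Real.exp ((3:ℝ)/8)^N * (1/2:ℝ)^N ≤ (73/100:ℝ)^N := by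
      rw [← mul_pow]
      exact pow_le_pow_left₀ (by positivity) (by nlinarith [Real.exp_pos ((3:ℝ)/8)]) N
    have hN2 : Real.sqrt N ≤ 2 * (100/73:ℝ)^N := by
      have h5 : (1:ℝ) + N*(27/73) ≤ (100/73:ℝ)^N := by
        have h5' := one_add_mul_le_pow (by norm_num : (-2:ℝ) ≤ 27/73) N
        norm_num at h5' ⊢
        try exact h5'
        try linarith [h5']
      have h6 : Real.sqrt N ≤ ((N:ℝ)+1)/2 := by
        nlinarith [sq_nonneg (Real.sqrt (N:ℝ) - 1),
          Real.sq_sqrt (Nat.cast_nonneg N : (0:ℝ) ≤ N)]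
      nlinarith [h5, h6]
    have hmain : Real.sqrt N * (Real.exp (3*(N:ℝ)/8) * (1/2:ℝ)^N) ≤ 2 := by
      rw [hexpN]
      calc Real.sqrt N * (Real.exp ((3:ℝ)/8)^N * (1/2:ℝ)^N)
          ≤ (2*(100/73:ℝ)^N) * (73/100:ℝ)^N := by
            apply mul_le_mul hN2 hprod (by positivity) (by positivity)
        _ = 2 * ((100/73:ℝ)*(73/100))^N := by rw [mul_pow]; ring
        _ = 2 := by norm_num
    have hsL23 : (2/3:ℝ) ≤ Real.sqrt L := by
      nlinarith [Real.sq_sqrt hL0.le, Real.sqrt_nonneg L]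
    calc σ * Real.exp (3*(N:ℝ)/8) * (1/2:ℝ)^N
        = Real.sqrt c₂ * (Real.sqrt N * (Real.exp (3*(N:ℝ)/8) * (1/2:ℝ)^N)) := by
          rw [hσN]; ring
      _ ≤ Real.sqrt c₂ * 2 := mul_le_mul_of_nonneg_left hmain hsc
      _ ≤ 3*Real.sqrt c₂ * Real.sqrt L := by nlinarith [hsc, hsL23]
  have hsL : 0 ≤ Real.sqrt L := Real.sqrt_nonneg _
  calc ∫ a, supAbs φ a / Real.sqrt (∑ k, (a k)^2) ∂(stdGaussian N)
      ≤ (2*A/Real.sqrt N) * (u + t⁻¹) + σ * Real.exp (3*(N:ℝ)/8) * (1/2:ℝ)^N := hfint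
    _ ≤ 8*A*Real.sqrt c₂ * Real.sqrt L + 3*Real.sqrt c₂ * Real.sqrt L := add_le_add hB1 hB2
    _ ≤ (8*A*Real.sqrt c₂ + 3*Real.sqrt c₂ + 1) * Real.sqrt L := by nlinarith
end

section
/- Assume the lower Weyl bound Σ_{k=1}^N φ_k(x)² ≥ c₁ N for all x ∈ Ω (c₁ > 0), and assume there are points y_1, …, y_m ∈ Ω with m ≥ 2 such that Σ_{k=1}^N φ_k(y_i) φ_k(y_j) ≤ (c₁/2) N whenever i ≠ j. Then there is a constant c > 0 depending only on c₁ such that E[‖P_a‖_∞ / ‖P_a‖_2] ≥ c (ln m)^{1/2}. (Lower bound in the average Nikolskii factor N^{ave}_{2,∞}(𝒫_n) ≍ √(ln n).) -/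
open MeasureTheory ProbabilityTheory

open Real
open scoped ENNReal

namespace AvgNik

instance (N : ℕ) : IsProbabilityMeasure (stdGaussian N) := by
  unfold _root_.stdGaussian; infer_instance

noncomputable def Gd (N : ℕ) (x : Fin N → ℝ) : ℝ := ∏ k, gaussianPDFReal 0 1 (x k)

lemma Gd_nonneg (N : ℕ) (x : Fin N → ℝ) : 0 ≤ Gd N x :=
  Finset.prod_nonneg fun k _ => gaussianPDFReal_nonneg 0 1 (x k)

lemma measurable_Gd (N : ℕ) : Measurable (Gd N) :=
  Finset.measurable_prod _ fun k _ => (measurable_gaussianPDFReal 0 1).comp (measurable_pi_apply k)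

lemma pdf_shift (a b : ℝ) :
    gaussianPDFReal 0 1 (a + b) = gaussianPDFReal 0 1 a * Real.exp (-(a*b) - b^2/2) := by
  simp only [gaussianPDFReal, NNReal.coe_one, mul_one, sub_zero]
  rw [mul_assoc, ← Real.exp_add]
  congr 1
  ring

lemma Gd_shift (N : ℕ) (x h : Fin N → ℝ) :
    Gd N (x + h) = Gd N x * Real.exp (-(∑ k, x k * h k) - (∑ k, h k ^ 2) / 2) := by
  simp only [Gd, Pi.add_apply]
  rw [Finset.prod_congr rfl (fun k _ => pdf_shift (x k) (h k)), Finset.prod_mul_distrib,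
    ← Real.exp_sum]
  congr 1
  rw [Finset.sum_sub_distrib, Finset.sum_neg_distrib, ← Finset.sum_div]

lemma stdGaussian_eq (N : ℕ) :
    stdGaussian N = (volume : Measure (Fin N → ℝ)).withDensity
      (fun x => ENNReal.ofReal (Gd N x)) := by
  refine Measure.pi_eq fun s hs => ?_
  rw [withDensity_apply _ (MeasurableSet.univ_pi hs)]
  have hint : IntegrableOn (Gd N) (Set.pi Set.univ s) volume :=
    (Integrable.fintype_prod (f := fun (_ : Fin N) => gaussianPDFReal 0 1)
      (fun _ => integrable_gaussianPDFReal 0 1)).integrableOn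
  rw [← ofReal_integral_eq_lintegral_ofReal hint
    (ae_of_all _ fun x => Gd_nonneg N x)]
  have : ∫ x in Set.pi Set.univ s, Gd N x =
      ∫ x : Fin N → ℝ, ∏ k, (s k).indicator (gaussianPDFReal 0 1) (x k) := by
    rw [← integral_indicator (MeasurableSet.univ_pi hs)]
    congr 1
    ext x
    by_cases hx : x ∈ Set.pi Set.univ s
    · rw [Set.indicator_of_mem hx]
      exact Finset.prod_congr rfl fun k _ =>
        (Set.indicator_of_mem (hx k (Set.mem_univ k)) _).symm
    · rw [Set.indicator_of_notMem hx]
      rw [Set.mem_pi] at hx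
      push_neg at hx
      obtain ⟨k, _, hk⟩ := hx
      exact (Finset.prod_eq_zero (Finset.mem_univ k) (Set.indicator_of_notMem hk _)).symm
  rw [this, integral_fintype_prod_volume_eq_prod (f := fun (k : Fin N) => (s k).indicator (gaussianPDFReal 0 1))]
  rw [ENNReal.ofReal_prod_of_nonneg (fun k _ => integral_nonneg fun x =>
    Set.indicator_nonneg (fun t _ => gaussianPDFReal_nonneg 0 1 t) x)]
  refine Finset.prod_congr rfl fun k _ => ?_
  rw [integral_indicator (hs k), ← gaussianReal_apply_eq_integral 0 one_ne_zero (s k)]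


lemma shift_eq (N : ℕ) (D : Set (Fin N → ℝ)) (hD : MeasurableSet D) (h : Fin N → ℝ) :
    stdGaussian N ((fun x => x - h) ⁻¹' D)
      = ∫⁻ y in D, ENNReal.ofReal (Gd N (y + h)) ∂volume := by
  have hm : Measurable (fun x : Fin N → ℝ => x - h) := measurable_sub_const h
  rw [stdGaussian_eq, withDensity_apply _ (hm hD)]
  rw [← lintegral_indicator (hm hD), ← lintegral_indicator hD]
  rw [← lintegral_add_right_eq_self
    (fun x => ((fun x : Fin N → ℝ => x - h) ⁻¹' D).indicator
      (fun x => ENNReal.ofReal (Gd N x)) x) h]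
  congr 1
  ext x
  by_cases hx : x ∈ D
  · rw [Set.indicator_of_mem hx]
    rw [Set.indicator_of_mem (by simp [Set.mem_preimage, hx])]
  · rw [Set.indicator_of_notMem hx]
    rw [Set.indicator_of_notMem (by simp [Set.mem_preimage, hx])]

lemma shift_sum_ge (N : ℕ) (D : Set (Fin N → ℝ)) (hD : MeasurableSet D) (h : Fin N → ℝ) :
    2 * ENNReal.ofReal (Real.exp (-(∑ k, h k ^ 2) / 2)) * stdGaussian N D
      ≤ stdGaussian N ((fun x => x - h) ⁻¹' D) + stdGaussian N ((fun x => x + h) ⁻¹' D) := by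
  have h2 : (fun x : Fin N → ℝ => x + h) = (fun x : Fin N → ℝ => x - (-h)) := by
    funext x; simp [sub_neg_eq_add]
  rw [shift_eq N D hD h, h2, shift_eq N D hD (-h)]
  rw [← lintegral_add_left (f := fun y : Fin N → ℝ => ENNReal.ofReal (Gd N (y + h)))
    (((measurable_Gd N).comp (measurable_add_const h)).ennreal_ofReal)
    (fun y => ENNReal.ofReal (Gd N (y + -h)))]
  rw [stdGaussian_eq, withDensity_apply _ hD]
  rw [← lintegral_const_mul _ (measurable_Gd N).ennreal_ofReal]
  refine lintegral_mono fun y => ?_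
  have key : 2 * (Real.exp (-(∑ k, h k ^ 2) / 2)) * Gd N y ≤ Gd N (y + h) + Gd N (y + (-h)) := by
    rw [Gd_shift, Gd_shift]
    have hsum : ∑ k, y k * (-h) k = -∑ k, y k * h k := by
      simp [Finset.sum_neg_distrib]
    have hsq : ∑ k, ((-h) k) ^ 2 = ∑ k, h k ^ 2 := by simp
    rw [hsum, hsq, show (-(∑ k, h k ^ 2)) / 2 = -((∑ k, h k ^ 2) / 2) from neg_div _ _]
    set t := ∑ k, y k * h k
    set c := (∑ k, h k ^ 2) / 2
    have : Real.exp (-t - c) + Real.exp (- -t - c)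
        = (Real.exp (-t) + Real.exp t) * Real.exp (-c) := by
      rw [add_mul, ← Real.exp_add, ← Real.exp_add]; ring_nf
    rw [← mul_add, this]
    have h1 : 2 * Real.exp (-c) ≤ (Real.exp (-t) + Real.exp t) * Real.exp (-c) := by
      have := Real.one_le_cosh t
      rw [Real.cosh_eq] at this
      nlinarith [Real.exp_pos (-c)]
    calc 2 * Real.exp (-c) * Gd N y ≤ (Real.exp (-t) + Real.exp t) * Real.exp (-c) * Gd N y :=
          mul_le_mul_of_nonneg_right h1 (Gd_nonneg N y)
      _ = Gd N y * ((Real.exp (-t) + Real.exp t) * Real.exp (-c)) := by ring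
  calc 2 * ENNReal.ofReal (Real.exp (-(∑ k, h k ^ 2) / 2)) * ENNReal.ofReal (Gd N y)
      = ENNReal.ofReal (2 * Real.exp ((-(∑ k, h k ^ 2)) / 2) * Gd N y) := by
        rw [ENNReal.ofReal_mul (by positivity), ENNReal.ofReal_mul (by norm_num)]
        congr
        exact (ENNReal.ofReal_ofNat 2).symm
    _ ≤ ENNReal.ofReal (Gd N (y + h) + Gd N (y + (-h))) := ENNReal.ofReal_le_ofReal key
    _ = ENNReal.ofReal (Gd N (y + h)) + ENNReal.ofReal (Gd N (y + (-h))) :=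
        ENNReal.ofReal_add (Gd_nonneg _ _) (Gd_nonneg _ _)
    _ = _ := rfl

lemma pdf01 (t : ℝ) : gaussianPDFReal 0 1 t = (Real.sqrt (2 * π))⁻¹ * Real.exp (-(t^2) / 2) := by
  simp [gaussianPDFReal]

lemma integrable_sq_pdf : Integrable (fun t : ℝ => t ^ 2 * gaussianPDFReal 0 1 t) := by
  have h := integrable_rpow_mul_exp_neg_mul_sq (b := (1/2 : ℝ)) (by norm_num) (s := (2:ℝ)) (by norm_num)
  have h2 : (fun x : ℝ => x ^ (2:ℝ) * Real.exp (-(1/2) * x ^ 2))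
      = fun x : ℝ => x ^ 2 * Real.exp (-(1/2) * x ^ 2) := by
    funext x
    rw [show (2:ℝ) = ((2:ℕ):ℝ) by norm_num, Real.rpow_natCast]
  rw [h2] at h
  have : (fun t : ℝ => t ^ 2 * gaussianPDFReal 0 1 t)
      = fun t : ℝ => (Real.sqrt (2 * π))⁻¹ * (t ^ 2 * Real.exp (-(1/2) * t ^ 2)) := by
    funext t; rw [pdf01]; ring_nf
  rw [this]
  exact h.const_mul _

lemma integral_sq_pdf : ∫ t : ℝ, t ^ 2 * gaussianPDFReal 0 1 t = 1 := by
  have key : ∫ t : ℝ, t ^ 2 * Real.exp (-(1/2) * t ^ 2) = Real.sqrt 2 * Real.sqrt π := by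
    have heven : (fun t : ℝ => t ^ 2 * Real.exp (-(1/2) * t ^ 2))
        = fun t : ℝ => |t| ^ 2 * Real.exp (-(1/2) * |t| ^ 2) := by
      funext t; rw [sq_abs]
    rw [heven, integral_comp_abs (f := fun t : ℝ => t ^ 2 * Real.exp (-(1/2) * t ^ 2))]
    have hconv : ∀ x ∈ Set.Ioi (0:ℝ), x ^ 2 * Real.exp (-(1/2) * x ^ 2)
        = x ^ (2:ℝ) * Real.exp (-(1/2) * x ^ (2:ℝ)) := by
      intro x _
      rw [show (2:ℝ) = ((2:ℕ):ℝ) by norm_num, Real.rpow_natCast]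
    rw [setIntegral_congr_fun measurableSet_Ioi hconv,
      integral_rpow_mul_exp_neg_mul_rpow (by norm_num) (by norm_num) (by norm_num)]
    have hgamma : Real.Gamma ((2 + 1) / 2) = Real.sqrt π / 2 := by
      rw [show ((2:ℝ) + 1) / 2 = 1/2 + 1 by norm_num, Real.Gamma_add_one (by norm_num),
        Real.Gamma_one_half_eq]
      ring
    rw [hgamma]
    have hb : ((1:ℝ)/2) ^ (-((2:ℝ) + 1) / 2) = 2 * Real.sqrt 2 := by
      have h1 : ((1:ℝ)/2) ^ (-((2:ℝ) + 1) / 2) = (2:ℝ) ^ ((3:ℝ)/2) := by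
        rw [show (-((2:ℝ)+1)/2) = -((3:ℝ)/2) by norm_num,
          Real.rpow_neg (by norm_num : (0:ℝ) ≤ 1/2),
          show ((1:ℝ)/2) = 2⁻¹ by norm_num,
          Real.inv_rpow (by norm_num : (0:ℝ) ≤ 2), inv_inv]
      rw [h1, show ((3:ℝ)/2) = 1 + 1/2 by norm_num,
        Real.rpow_add (by norm_num : (0:ℝ) < 2), Real.rpow_one, ← Real.sqrt_eq_rpow]
    rw [hb]
    ring
  calc ∫ t : ℝ, t ^ 2 * gaussianPDFReal 0 1 t
      = ∫ t : ℝ, (Real.sqrt (2*π))⁻¹ * (t ^ 2 * Real.exp (-(1/2) * t ^ 2)) := by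
        congr 1; funext t; rw [pdf01]; ring_nf
    _ = (Real.sqrt (2*π))⁻¹ * (Real.sqrt 2 * Real.sqrt π) := by
        rw [integral_const_mul, key]
    _ = 1 := by
        rw [Real.sqrt_mul (by norm_num)]
        field_simp


lemma map_eval (N : ℕ) (k : Fin N) :
    (stdGaussian N).map (fun x => x k) = gaussianReal 0 1 := by
  refine Measure.ext fun s hs => ?_
  rw [Measure.map_apply (measurable_pi_apply k) hs]
  have : (fun x : Fin N → ℝ => x k) ⁻¹' s
      = Set.pi Set.univ (fun j => if j = k then s else Set.univ) := by
    ext x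
    simp only [Set.mem_preimage, Set.mem_pi, Set.mem_univ, forall_true_left]
    constructor
    · intro h j; by_cases hj : j = k <;> simp [hj, h]
    · intro h; have := h k; simpa using this
  rw [this, _root_.stdGaussian, Measure.pi_pi]
  calc ∏ j : Fin N, (gaussianReal 0 1) (if j = k then s else Set.univ)
      = ∏ j : Fin N, (if j = k then gaussianReal 0 1 s else 1) := by
        refine Finset.prod_congr rfl fun j _ => ?_
        by_cases hj : j = k <;> simp [hj]
    _ = gaussianReal 0 1 s := by rw [Finset.prod_ite_eq' Finset.univ k
          (fun _ => gaussianReal 0 1 s)]; simp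

lemma lintegral_sq_coord (N : ℕ) (k : Fin N) :
    ∫⁻ x, ENNReal.ofReal ((x k) ^ 2) ∂(stdGaussian N) = 1 := by
  have h1 : ∫⁻ x, ENNReal.ofReal ((x k) ^ 2) ∂(stdGaussian N)
      = ∫⁻ t, ENNReal.ofReal (t ^ 2) ∂(gaussianReal 0 1) := by
    rw [← map_eval N k, lintegral_map ((measurable_id'.pow_const 2).ennreal_ofReal)
      (measurable_pi_apply k)]
  rw [h1, gaussianReal_of_var_ne_zero 0 one_ne_zero,
    lintegral_withDensity_eq_lintegral_mul _ (measurable_gaussianPDF 0 1)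
      ((measurable_id'.pow_const 2).ennreal_ofReal)]
  have h2 : (fun t : ℝ => gaussianPDF 0 1 t * ENNReal.ofReal (t ^ 2))
      = fun t : ℝ => ENNReal.ofReal (t ^ 2 * gaussianPDFReal 0 1 t) := by
    funext t
    rw [gaussianPDF, ← ENNReal.ofReal_mul (gaussianPDFReal_nonneg 0 1 t), mul_comm]
  simp only [Pi.mul_apply]
  rw [show (fun t : ℝ => gaussianPDF 0 1 t * ENNReal.ofReal (t ^ 2)) = _ from h2]
  rw [← ofReal_integral_eq_lintegral_ofReal integrable_sq_pdf
    (ae_of_all _ fun t => mul_nonneg (sq_nonneg t) (gaussianPDFReal_nonneg 0 1 t)),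
    integral_sq_pdf, ENNReal.ofReal_one]

lemma markov_norm (N : ℕ) (hN : 1 ≤ N) :
    (stdGaussian N {x | (9:ℝ) * N < ∑ k, x k ^ 2}).toReal ≤ 1/9 := by
  have hsub : {x : Fin N → ℝ | (9:ℝ) * N < ∑ k, x k ^ 2}
      ⊆ {x : Fin N → ℝ | ENNReal.ofReal ((9:ℝ) * N) ≤ ENNReal.ofReal (∑ k, x k ^ 2)} :=
    fun x hx => by exact ENNReal.ofReal_le_ofReal (le_of_lt hx)
  have hmeasf : Measurable fun x : Fin N → ℝ => ENNReal.ofReal (∑ k, x k ^ 2) :=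
    (Finset.measurable_sum _ fun k _ => (measurable_pi_apply k).pow_const 2).ennreal_ofReal
  have hlint : ∫⁻ x, ENNReal.ofReal (∑ k, x k ^ 2) ∂(stdGaussian N) = N := by
    have : ∀ x : Fin N → ℝ, ENNReal.ofReal (∑ k, x k ^ 2)
        = ∑ k, ENNReal.ofReal ((x k) ^ 2) := fun x =>
      ENNReal.ofReal_sum_of_nonneg fun k _ => sq_nonneg _
    simp_rw [this]
    rw [lintegral_finset_sum _ fun k _ => ((measurable_pi_apply k).pow_const 2).ennreal_ofReal]
    simp [lintegral_sq_coord]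
  have hmarkov := mul_meas_ge_le_lintegral (μ := stdGaussian N) hmeasf
    (ENNReal.ofReal ((9:ℝ) * N))
  rw [hlint] at hmarkov
  have h9 : (0:ℝ) < 9 * N := by positivity
  have hε0 : ENNReal.ofReal ((9:ℝ) * N) ≠ 0 := by
    simp [ENNReal.ofReal_eq_zero, not_le, h9]; omega
  have hεtop : ENNReal.ofReal ((9:ℝ) * N) ≠ ∞ := ENNReal.ofReal_ne_top
  have hle : stdGaussian N {x | (9:ℝ) * N < ∑ k, x k ^ 2}
      ≤ (N : ℝ≥0∞) / ENNReal.ofReal ((9:ℝ) * N) := by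
    refine le_trans (measure_mono hsub) ?_
    rw [ENNReal.le_div_iff_mul_le (Or.inl hε0) (Or.inl hεtop), mul_comm]
    exact hmarkov
  have := ENNReal.toReal_mono (by
    simp [ENNReal.div_eq_top, hε0, hεtop]) hle
  refine le_trans this ?_
  rw [ENNReal.toReal_div, ENNReal.toReal_ofReal (le_of_lt h9)]
  simp only [ENNReal.toReal_natCast]
  rw [div_le_div_iff₀ (by positivity) (by norm_num)]
  have : (1:ℝ) ≤ (N:ℝ) := by exact_mod_cast hN
  nlinarith

lemma smallball (N m : ℕ) (hm : 2 ≤ m) (u : Fin m → Fin N → ℝ)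
    (hunit : ∀ i, ∑ k, u i k ^ 2 = 1)
    (hcorr : ∀ i j, i ≠ j → ∑ k, u i k * u j k ≤ 1 / 2)
    {r : ℝ} (hr : 0 < r) :
    (stdGaussian N {x | ∀ i, |∑ k, x k * u i k| ≤ r}).toReal
      ≤ Real.exp (25 * r ^ 2 / 2) / m := by
  set D : Set (Fin N → ℝ) := {x | ∀ i, |∑ k, x k * u i k| ≤ r} with hDdef
  have hmeas : ∀ i : Fin m, Measurable (fun x : Fin N → ℝ => ∑ k, x k * u i k) :=
    fun i => Finset.measurable_sum _ fun k _ => (measurable_pi_apply k).mul_const _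
  have hD : MeasurableSet D := by
    have : D = ⋂ i, {x : Fin N → ℝ | |∑ k, x k * u i k| ≤ r} := by
      ext x; simp [hDdef, Set.mem_iInter]
    rw [this]
    exact MeasurableSet.iInter fun i => measurableSet_le ((hmeas i).abs) measurable_const
  set c : Fin m → (Fin N → ℝ) := fun i k => (5 * r) * u i k with hcdef
  -- membership consequences
  have hmem : ∀ (x : Fin N → ℝ) (i l : Fin m), x ∈ D →
      |∑ k, x k * u l k| ≤ r := fun x i l hx => hx l
  have hsub : ∀ (x : Fin N → ℝ) (i l : Fin m),
      ∑ k, (x - c i) k * u l k = (∑ k, x k * u l k) - 5 * r * (∑ k, u i k * u l k) := by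
    intro x i l
    rw [Finset.mul_sum, ← Finset.sum_sub_distrib]
    refine Finset.sum_congr rfl fun k _ => ?_
    simp [hcdef]; ring
  have hadd : ∀ (x : Fin N → ℝ) (i l : Fin m),
      ∑ k, (x + c i) k * u l k = (∑ k, x k * u l k) + 5 * r * (∑ k, u i k * u l k) := by
    intro x i l
    rw [Finset.mul_sum, ← Finset.sum_add_distrib]
    refine Finset.sum_congr rfl fun k _ => ?_
    simp [hcdef]; ring
  -- disjointness
  have hdisj : Pairwise (Function.onFun Disjoint (fun i => (fun x => x - c i) ⁻¹' D)) := by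
    intro i j hij
    rw [Function.onFun, Set.disjoint_left]
    intro x hxi hxj
    have h1 := (hxi i)
    have h2 := (hxj i)
    rw [Set.mem_preimage] at hxi hxj
    have e1 := hxi i; have e2 := hxj i
    rw [hDdef, Set.mem_setOf_eq] at hxi hxj
    have b1 : |(∑ k, x k * u i k) - 5 * r * (∑ k, u i k * u i k)| ≤ r := by
      rw [← hsub x i i]; exact hxi i
    have b2 : |(∑ k, x k * u i k) - 5 * r * (∑ k, u j k * u i k)| ≤ r := by
      rw [← hsub x j i]; exact hxj i
    have huii : ∑ k, u i k * u i k = 1 := by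
      rw [← hunit i]; exact Finset.sum_congr rfl fun k _ => (sq (u i k)).symm
    have hρ : ∑ k, u j k * u i k ≤ 1 / 2 := hcorr j i (Ne.symm hij)
    rw [huii, mul_one] at b1
    rw [abs_le] at b1 b2
    nlinarith [b1.1, b1.2, b2.1, b2.2]
  have hdisj' : Pairwise (Function.onFun Disjoint (fun i => (fun x => x + c i) ⁻¹' D)) := by
    intro i j hij
    rw [Function.onFun, Set.disjoint_left]
    intro x hxi hxj
    rw [Set.mem_preimage, hDdef, Set.mem_setOf_eq] at hxi hxj
    have b1 : |(∑ k, x k * u i k) + 5 * r * (∑ k, u i k * u i k)| ≤ r := by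
      rw [← hadd x i i]; exact hxi i
    have b2 : |(∑ k, x k * u i k) + 5 * r * (∑ k, u j k * u i k)| ≤ r := by
      rw [← hadd x j i]; exact hxj i
    have huii : ∑ k, u i k * u i k = 1 := by
      rw [← hunit i]; exact Finset.sum_congr rfl fun k _ => (sq (u i k)).symm
    have hρ : ∑ k, u j k * u i k ≤ 1 / 2 := hcorr j i (Ne.symm hij)
    rw [huii, mul_one] at b1
    rw [abs_le] at b1 b2
    nlinarith [b1.1, b1.2, b2.1, b2.2]
  have hmeasT : ∀ i : Fin m, MeasurableSet ((fun x : Fin N → ℝ => x - c i) ⁻¹' D) :=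
    fun i => (measurable_sub_const (c i)) hD
  have hmeasT' : ∀ i : Fin m, MeasurableSet ((fun x : Fin N → ℝ => x + c i) ⁻¹' D) :=
    fun i => (measurable_add_const (c i)) hD
  have hsum1 : ∑ i : Fin m, stdGaussian N ((fun x => x - c i) ⁻¹' D) ≤ 1 := by
    rw [← tsum_fintype (L := SummationFilter.unconditional _), ← measure_iUnion hdisj hmeasT]
    exact prob_le_one
  have hsum2 : ∑ i : Fin m, stdGaussian N ((fun x => x + c i) ⁻¹' D) ≤ 1 := by
    rw [← tsum_fintype (L := SummationFilter.unconditional _), ← measure_iUnion hdisj' hmeasT']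
    exact prob_le_one
  have hc2 : ∀ i, ∑ k, (c i) k ^ 2 = 25 * r ^ 2 := by
    intro i
    have : ∀ k, (c i) k ^ 2 = (25 * r ^ 2) * (u i k ^ 2) := by intro k; simp [hcdef]; ring
    rw [Finset.sum_congr rfl fun k _ => this k, ← Finset.mul_sum, hunit i, mul_one]
  have hkey : (m : ℝ≥0∞) * (2 * ENNReal.ofReal (Real.exp (-(25 * r ^ 2) / 2)) * stdGaussian N D)
      ≤ 2 := by
    calc (m : ℝ≥0∞) * (2 * ENNReal.ofReal (Real.exp (-(25 * r ^ 2) / 2)) * stdGaussian N D)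
        = ∑ _i : Fin m, (2 * ENNReal.ofReal (Real.exp (-(25 * r ^ 2) / 2)) * stdGaussian N D) := by
          rw [Finset.sum_const, Finset.card_univ, Fintype.card_fin, nsmul_eq_mul]
      _ ≤ ∑ i : Fin m, (stdGaussian N ((fun x => x - c i) ⁻¹' D)
            + stdGaussian N ((fun x => x + c i) ⁻¹' D)) := by
          refine Finset.sum_le_sum fun i _ => ?_
          have := shift_sum_ge N D hD (c i)
          rwa [hc2 i] at this
      _ = (∑ i : Fin m, stdGaussian N ((fun x => x - c i) ⁻¹' D))
            + ∑ i : Fin m, stdGaussian N ((fun x => x + c i) ⁻¹' D) := Finset.sum_add_distrib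
      _ ≤ 1 + 1 := add_le_add hsum1 hsum2
      _ = 2 := one_add_one_eq_two
  -- convert to real
  have hfin : stdGaussian N D ≠ ∞ := measure_ne_top _ _
  have htoReal : (m : ℝ) * (2 * Real.exp (-(25 * r ^ 2) / 2) * (stdGaussian N D).toReal) ≤ 2 := by
    have h2 : ((m : ℝ≥0∞) * (2 * ENNReal.ofReal (Real.exp (-(25 * r ^ 2) / 2))
        * stdGaussian N D)).toReal ≤ (2 : ℝ≥0∞).toReal :=
      ENNReal.toReal_mono (by norm_num) hkey
    rw [ENNReal.toReal_mul, ENNReal.toReal_mul, ENNReal.toReal_mul] at h2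
    simpa [ENNReal.toReal_ofReal (Real.exp_nonneg _)] using h2
  have hm0 : (0:ℝ) < m := by positivity
  have hexp : 0 < Real.exp (-(25 * r ^ 2) / 2) := Real.exp_pos _
  have : (stdGaussian N D).toReal ≤ 2 / ((m : ℝ) * (2 * Real.exp (-(25 * r ^ 2) / 2))) := by
    rw [le_div_iff₀ (by positivity)]
    nlinarith [htoReal]
  calc (stdGaussian N D).toReal ≤ 2 / ((m : ℝ) * (2 * Real.exp (-(25 * r ^ 2) / 2))) := this
    _ = Real.exp (25 * r ^ 2 / 2) / m := by
        rw [show -(25 * r ^ 2) / 2 = -(25 * r ^ 2 / 2) by ring, Real.exp_neg]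
        field_simp

end AvgNik

open AvgNik

/-- under the lower Weyl bound and the separated-points hypothesis
(`m` points whose off-diagonal kernel values are at most `(c₁/2) N`), one has
`E[‖P_a‖_∞ / ‖P_a‖_2] ≥ c √(ln m)` with `c > 0` depending only on `c₁`. -/
theorem average_nikolskii_two_infty_lower (c₁ : ℝ) (hc₁ : 0 < c₁) :
    ∃ c : ℝ, 0 < c ∧
      ∀ (Ω : Type) [MeasurableSpace Ω] (μ : Measure Ω) [IsProbabilityMeasure μ]
        (N : ℕ), 1 ≤ N →
        ∀ φ : Fin N → Ω → ℝ,
          (∀ k, Measurable (φ k)) →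
          (∀ k, ∃ B : ℝ, ∀ x, |φ k x| ≤ B) →
          (∀ i j, (∫ x, φ i x * φ j x ∂μ) = if i = j then (1 : ℝ) else 0) →
          (∀ x, c₁ * N ≤ ∑ k, φ k x ^ 2) →
          ∀ (m : ℕ), 2 ≤ m →
          ∀ ys : Fin m → Ω,
            (∀ i j : Fin m, i ≠ j → ∑ k, φ k (ys i) * φ k (ys j) ≤ c₁ / 2 * N) →
            c * Real.sqrt (Real.log m) ≤
              ∫ a, (⨆ x, |∑ k, a k * φ k x|) /
                  (∫ x, |∑ k, a k * φ k x| ^ (2 : ℝ) ∂μ) ^ ((1 : ℝ) / 2)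
                ∂(stdGaussian N) := by
  refine ⟨Real.sqrt c₁ / 100, by positivity, ?_⟩
  intro Ω _ μ _ N hN φ hmeas hbdd hortho hweyl m hm ys hsep
  haveI : Nonempty Ω := ⟨ys ⟨0, by omega⟩⟩
  -- bounds on φ
  set B : Fin N → ℝ := fun k => (hbdd k).choose with hBdef
  have hB : ∀ k x, |φ k x| ≤ B k := fun k => (hbdd k).choose_spec
  have hBnn : ∀ k, 0 ≤ B k := fun k => le_trans (abs_nonneg _) (hB k (Classical.arbitrary Ω))
  set M2 : ℝ := Real.sqrt (∑ k, B k ^ 2) with hM2def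
  have hM2nn : 0 ≤ M2 := Real.sqrt_nonneg _
  -- pointwise Cauchy-Schwarz bound
  have hCS : ∀ (a : Fin N → ℝ) (x : Ω), |∑ k, a k * φ k x|
      ≤ Real.sqrt (∑ k, a k ^ 2) * M2 := by
    intro a x
    have h1 : (∑ k, a k * φ k x) ^ 2 ≤ (∑ k, a k ^ 2) * (∑ k, (φ k x) ^ 2) :=
      Finset.sum_mul_sq_le_sq_mul_sq _ _ _
    have h2 : (∑ k, (φ k x) ^ 2) ≤ ∑ k, B k ^ 2 :=
      Finset.sum_le_sum fun k _ => by
        rw [← sq_abs]; exact pow_le_pow_left₀ (abs_nonneg _) (hB k x) 2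
    have h3 : (∑ k, a k * φ k x) ^ 2 ≤ (∑ k, a k ^ 2) * (∑ k, B k ^ 2) :=
      le_trans h1 (mul_le_mul_of_nonneg_left h2 (Finset.sum_nonneg fun k _ => sq_nonneg _))
    calc |∑ k, a k * φ k x| = Real.sqrt ((∑ k, a k * φ k x) ^ 2) :=
          (Real.sqrt_sq_eq_abs _).symm
      _ ≤ Real.sqrt ((∑ k, a k ^ 2) * (∑ k, B k ^ 2)) := Real.sqrt_le_sqrt h3
      _ = Real.sqrt (∑ k, a k ^ 2) * M2 := Real.sqrt_mul (Finset.sum_nonneg fun k _ =>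
          sq_nonneg _) _
  -- the sup functional
  set S : (Fin N → ℝ) → ℝ := fun a => ⨆ x, |∑ k, a k * φ k x| with hSdef
  have hbddS : ∀ a : Fin N → ℝ, BddAbove (Set.range fun x => |∑ k, a k * φ k x|) := by
    intro a
    exact ⟨Real.sqrt (∑ k, a k ^ 2) * M2, fun y ⟨x, hx⟩ => hx ▸ hCS a x⟩
  have hSle : ∀ a x, |∑ k, a k * φ k x| ≤ S a := fun a x => le_ciSup (hbddS a) x
  have hSnn : ∀ a, 0 ≤ S a := fun a =>
    le_trans (abs_nonneg _) (hSle a (Classical.arbitrary Ω))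
  have hSub : ∀ a, S a ≤ Real.sqrt (∑ k, a k ^ 2) * M2 := fun a =>
    ciSup_le fun x => hCS a x
  -- Lipschitz continuity of S, hence measurability
  have hSlip : ∀ a b : Fin N → ℝ, S a - S b ≤ (Real.sqrt N * M2) * dist a b := by
    intro a b
    rw [sub_le_iff_le_add]
    refine ciSup_le fun x => ?_
    have h1 : |∑ k, a k * φ k x| ≤ |∑ k, b k * φ k x| + |∑ k, (a k - b k) * φ k x| := by
      have : (∑ k, a k * φ k x) = (∑ k, b k * φ k x) + ∑ k, (a k - b k) * φ k x := by
        rw [← Finset.sum_add_distrib]; exact Finset.sum_congr rfl fun k _ => by ring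
      rw [this]; exact abs_add_le _ _
    have h2 : |∑ k, (a k - b k) * φ k x| ≤ Real.sqrt (∑ k, (a k - b k) ^ 2) * M2 := hCS _ x
    have h3 : Real.sqrt (∑ k, (a k - b k) ^ 2) ≤ Real.sqrt N * dist a b := by
      rw [← Real.sqrt_sq dist_nonneg, ← Real.sqrt_mul (Nat.cast_nonneg N)]
      refine Real.sqrt_le_sqrt ?_
      have : ∀ k, (a k - b k) ^ 2 ≤ dist a b ^ 2 := by
        intro k
        have := dist_le_pi_dist a b k
        have h0 : |a k - b k| ≤ dist a b := by rwa [Real.dist_eq] at this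
        calc (a k - b k)^2 = |a k - b k|^2 := (sq_abs _).symm
          _ ≤ dist a b ^ 2 := pow_le_pow_left₀ (abs_nonneg _) h0 2
      calc ∑ k, (a k - b k) ^ 2 ≤ ∑ _k : Fin N, dist a b ^ 2 :=
            Finset.sum_le_sum fun k _ => this k
        _ = N * dist a b ^ 2 := by rw [Finset.sum_const, Finset.card_univ,
            Fintype.card_fin, nsmul_eq_mul]
    calc |∑ k, a k * φ k x| ≤ |∑ k, b k * φ k x| + |∑ k, (a k - b k) * φ k x| := h1
      _ ≤ S b + Real.sqrt (∑ k, (a k - b k) ^ 2) * M2 := add_le_add (hSle b x) h2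
      _ ≤ S b + (Real.sqrt N * dist a b) * M2 :=
          add_le_add (le_refl _) (mul_le_mul_of_nonneg_right h3 hM2nn)
      _ = (Real.sqrt N * M2) * dist a b + S b := by ring
  have hScont : Continuous S := by
    have hlip : LipschitzWith (Real.toNNReal (Real.sqrt N * M2)) S := by
      refine LipschitzWith.of_dist_le_mul fun a b => ?_
      rw [Real.dist_eq, Real.coe_toNNReal _ (by positivity)]
      rw [abs_sub_le_iff]
      exact ⟨hSlip a b, by rw [dist_comm]; exact hSlip b a⟩
    exact hlip.continuous
  have hSmeas : Measurable S := hScont.measurable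
  -- rewrite the denominator
  have hL2 : ∀ a : Fin N → ℝ,
      (∫ x, |∑ k, a k * φ k x| ^ (2:ℝ) ∂μ) = ∑ k, a k ^ 2 := by
    intro a
    have hint : ∀ k l : Fin N, Integrable (fun x => (a k * a l) * (φ k x * φ l x)) μ := by
      intro k l
      refine (Integrable.mono' (integrable_const (B k * B l))
        (((hmeas k).mul (hmeas l)).aestronglyMeasurable)
        (ae_of_all _ fun x => ?_)).const_mul _
      rw [Real.norm_eq_abs, Pi.mul_apply, abs_mul]
      exact mul_le_mul (hB k x) (hB l x) (abs_nonneg _) (hBnn k)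
    have h1 : (fun x => |∑ k, a k * φ k x| ^ (2:ℝ))
        = fun x => ∑ k, ∑ l, (a k * a l) * (φ k x * φ l x) := by
      funext x
      rw [show ((2:ℝ)) = ((2:ℕ):ℝ) by norm_num, Real.rpow_natCast, sq_abs]
      rw [sq, Finset.sum_mul_sum]
      exact Finset.sum_congr rfl fun k _ => Finset.sum_congr rfl fun l _ => by ring
    rw [h1]
    rw [integral_finset_sum _ fun k _ => integrable_finset_sum _ fun l _ => hint k l]
    have h2 : ∀ k, ∫ x, ∑ l, (a k * a l) * (φ k x * φ l x) ∂μ = a k ^ 2 := by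
      intro k
      rw [integral_finset_sum _ fun l _ => hint k l]
      have h3 : ∀ l, ∫ x, (a k * a l) * (φ k x * φ l x) ∂μ
          = (a k * a l) * if k = l then 1 else 0 := by
        intro l
        rw [integral_const_mul, hortho k l]
      rw [Finset.sum_congr rfl fun l _ => h3 l]
      rw [Finset.sum_eq_single k (fun l _ hl => by simp [Ne.symm hl]) (by simp)]
      simp [sq]
    rw [Finset.sum_congr rfl fun k _ => h2 k]
  -- rewrite the integrand
  simp only [hL2]
  simp_rw [← Real.sqrt_eq_rpow]
  set F : (Fin N → ℝ) → ℝ := fun a => S a / Real.sqrt (∑ k, a k ^ 2) with hFdef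
  have hsqmeas : Measurable fun a : Fin N → ℝ => Real.sqrt (∑ k, a k ^ 2) :=
    (Real.continuous_sqrt.measurable).comp
      (Finset.measurable_sum _ fun k _ => (measurable_pi_apply k).pow_const 2)
  have hFmeas : Measurable F := hSmeas.div hsqmeas
  have hFnn : ∀ a, 0 ≤ F a := fun a => div_nonneg (hSnn a) (Real.sqrt_nonneg _)
  have hFbd : ∀ a, F a ≤ M2 := by
    intro a
    rcases eq_or_lt_of_le (Real.sqrt_nonneg (∑ k, a k ^ 2)) with h0 | hpos
    · rw [hFdef]; simp only [← h0, div_zero]; exact hM2nn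
    · rw [hFdef, div_le_iff₀ hpos]
      calc S a ≤ Real.sqrt (∑ k, a k ^ 2) * M2 := hSub a
        _ = M2 * Real.sqrt (∑ k, a k ^ 2) := by ring
  have hFint : Integrable F (stdGaussian N) := by
    refine Integrable.mono' (integrable_const M2) hFmeas.aestronglyMeasurable
      (ae_of_all _ fun a => ?_)
    rw [Real.norm_eq_abs, abs_of_nonneg (hFnn a)]
    exact hFbd a
  -- normalized node vectors
  have hc₁N : (0:ℝ) < c₁ * N := by
    have : (1:ℝ) ≤ (N:ℝ) := by exact_mod_cast hN
    nlinarith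
  set σ : Fin m → ℝ := fun i => Real.sqrt (∑ k, φ k (ys i) ^ 2) with hσdef
  have hσlb : ∀ i, Real.sqrt (c₁ * N) ≤ σ i := fun i => Real.sqrt_le_sqrt (hweyl (ys i))
  have hσpos : ∀ i, 0 < σ i := fun i => lt_of_lt_of_le (Real.sqrt_pos.mpr hc₁N) (hσlb i)
  have hσsq : ∀ i, σ i ^ 2 = ∑ k, φ k (ys i) ^ 2 := fun i =>
    Real.sq_sqrt (Finset.sum_nonneg fun k _ => sq_nonneg _)
  set u : Fin m → Fin N → ℝ := fun i k => φ k (ys i) / σ i with hudef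
  have hunit : ∀ i, ∑ k, u i k ^ 2 = 1 := by
    intro i
    have : ∀ k, u i k ^ 2 = φ k (ys i) ^ 2 / σ i ^ 2 := fun k => div_pow _ _ 2
    rw [Finset.sum_congr rfl fun k _ => this k, ← Finset.sum_div, ← hσsq i,
      div_self (pow_ne_zero 2 (hσpos i).ne')]
  have hcorr : ∀ i j, i ≠ j → ∑ k, u i k * u j k ≤ 1 / 2 := by
    intro i j hij
    have hexp : ∀ k, u i k * u j k = (φ k (ys i) * φ k (ys j)) / (σ i * σ j) := fun k =>
      div_mul_div_comm _ _ _ _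
    rw [Finset.sum_congr rfl fun k _ => hexp k, ← Finset.sum_div]
    have hσσ : c₁ * N ≤ σ i * σ j := by
      calc c₁ * N = Real.sqrt (c₁ * N) * Real.sqrt (c₁ * N) :=
            (Real.mul_self_sqrt hc₁N.le).symm
        _ ≤ σ i * σ j := mul_le_mul (hσlb i) (hσlb j) (Real.sqrt_nonneg _)
            (le_trans (Real.sqrt_nonneg _) (hσlb i))
    calc (∑ k, φ k (ys i) * φ k (ys j)) / (σ i * σ j)
        ≤ (c₁ / 2 * N) / (σ i * σ j) :=
          (div_le_div_iff_of_pos_right (mul_pos (hσpos i) (hσpos j))).mpr (hsep i j hij)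
      _ ≤ (c₁ / 2 * N) / (c₁ * N) := by
          apply div_le_div_of_nonneg_left (by positivity) hc₁N hσσ
      _ = 1 / 2 := by field_simp
  -- parameters
  have hm1 : (1:ℝ) < (m:ℝ) := by exact_mod_cast lt_of_lt_of_le one_lt_two hm
  have hlog : 0 < Real.log m := Real.log_pos hm1
  set r : ℝ := Real.sqrt (Real.log m) / 5 with hrdef
  have hr : 0 < r := by positivity
  -- events
  set Dset : Set (Fin N → ℝ) := {a | ∀ i, |∑ k, a k * u i k| ≤ r} with hDsetdef
  set Tail : Set (Fin N → ℝ) := {a | (9:ℝ) * N < ∑ k, a k ^ 2} with hTaildef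
  have hDmeas : MeasurableSet Dset := by
    have : Dset = ⋂ i, {a : Fin N → ℝ | |∑ k, a k * u i k| ≤ r} := by
      ext a; simp [hDsetdef, Set.mem_iInter]
    rw [this]
    exact MeasurableSet.iInter fun i => measurableSet_le
      ((Finset.measurable_sum _ fun k _ => (measurable_pi_apply k).mul_const _).abs)
      measurable_const
  have hTmeas : MeasurableSet Tail := measurableSet_lt measurable_const
    (Finset.measurable_sum _ fun k _ => (measurable_pi_apply k).pow_const 2)
  set E : Set (Fin N → ℝ) := (Dset ∪ Tail)ᶜ with hEdef
  have hEmeas : MeasurableSet E := (hDmeas.union hTmeas).compl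
  -- pointwise lower bound on E
  have hEbound : ∀ a ∈ E, Real.sqrt c₁ * r / 3 ≤ F a := by
    intro a ha
    rw [hEdef, Set.mem_compl_iff, Set.mem_union] at ha
    push_neg at ha
    obtain ⟨haD, haT⟩ := ha
    rw [hDsetdef, Set.mem_setOf_eq] at haD
    push_neg at haD
    obtain ⟨i, hi⟩ := haD
    rw [hTaildef, Set.mem_setOf_eq, not_lt] at haT
    -- numerator bound
    have hnum0 : ∑ k, a k * φ k (ys i) = σ i * ∑ k, a k * u i k := by
      rw [Finset.mul_sum]
      refine Finset.sum_congr rfl fun k _ => ?_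
      rw [hudef]
      field_simp
      exact (mul_div_cancel_right₀ _ (hσpos i).ne').symm
    have hnum : Real.sqrt (c₁ * N) * r ≤ S a := by
      calc Real.sqrt (c₁ * N) * r ≤ σ i * |∑ k, a k * u i k| :=
            mul_le_mul (hσlb i) hi.le hr.le (le_trans (Real.sqrt_nonneg _) (hσlb i))
        _ = |σ i * ∑ k, a k * u i k| := by
            rw [abs_mul, abs_of_pos (hσpos i)]
        _ = |∑ k, a k * φ k (ys i)| := by rw [← hnum0]
        _ ≤ S a := hSle a (ys i)
    -- denominator bound
    have hden : Real.sqrt (∑ k, a k ^ 2) ≤ 3 * Real.sqrt N := by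
      calc Real.sqrt (∑ k, a k ^ 2) ≤ Real.sqrt ((9:ℝ) * N) := Real.sqrt_le_sqrt haT
        _ = 3 * Real.sqrt N := by
            rw [show (9:ℝ) * N = 3^2 * N by norm_num,
              Real.sqrt_mul (by positivity) (N:ℝ), Real.sqrt_sq (by norm_num)]
    have hdenpos : 0 < Real.sqrt (∑ k, a k ^ 2) := by
      rw [Real.sqrt_pos]
      by_contra hc
      push_neg at hc
      have hzero : ∑ k, a k ^ 2 = 0 :=
        le_antisymm hc (Finset.sum_nonneg fun k _ => sq_nonneg _)
      have hak : ∀ k, a k = 0 := by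
        intro k
        have := (Finset.sum_eq_zero_iff_of_nonneg (fun k _ => sq_nonneg (a k))).mp hzero
          k (Finset.mem_univ k)
        exact pow_eq_zero_iff (by norm_num) |>.mp this
      have : (∑ k, a k * u i k) = 0 := Finset.sum_eq_zero fun k _ => by rw [hak k, zero_mul]
      rw [this, abs_zero] at hi
      exact absurd hi (not_lt.mpr hr.le)
    have hNpos : (0:ℝ) < Real.sqrt N := Real.sqrt_pos.mpr (by positivity)
    calc Real.sqrt c₁ * r / 3 = (Real.sqrt (c₁ * N) * r) / (3 * Real.sqrt N) := by
          rw [Real.sqrt_mul hc₁.le]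
          field_simp
      _ ≤ S a / Real.sqrt (∑ k, a k ^ 2) :=
          div_le_div₀ (hSnn a) hnum hdenpos hden
      _ = F a := rfl
  -- probability bounds
  have hDprob : (stdGaussian N Dset).toReal ≤ 1 / Real.sqrt 2 := by
    have h1 := smallball N m hm u hunit hcorr hr
    have hr2 : 25 * r ^ 2 / 2 = Real.log m / 2 := by
      rw [hrdef, div_pow, Real.sq_sqrt hlog.le]
      ring
    have hexp : Real.exp (Real.log m / 2) = Real.sqrt m := by
      rw [Real.sqrt_eq_rpow, Real.rpow_def_of_pos (by positivity : (0:ℝ) < (m:ℝ))]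
      congr 1
      ring
    rw [hr2, hexp] at h1
    have hsm : Real.sqrt (m:ℝ) / m = 1 / Real.sqrt m := by
      have hmpos : (0:ℝ) < (m:ℝ) := by positivity
      have hspos : (0:ℝ) < Real.sqrt m := Real.sqrt_pos.mpr hmpos
      field_simp
      exact Real.sq_sqrt hmpos.le
    rw [hsm] at h1
    refine le_trans h1 ?_
    apply one_div_le_one_div_of_le (by positivity)
    exact Real.sqrt_le_sqrt (by exact_mod_cast hm)
  have hTprob : (stdGaussian N Tail).toReal ≤ 1/9 := markov_norm N hN
  -- measure of E
  have hEprob : 1 - (1 / Real.sqrt 2 + 1/9) ≤ (stdGaussian N E).toReal := by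
    have hunion : (stdGaussian N (Dset ∪ Tail)).toReal ≤ 1 / Real.sqrt 2 + 1/9 := by
      have h1 : stdGaussian N (Dset ∪ Tail) ≤ stdGaussian N Dset + stdGaussian N Tail :=
        measure_union_le _ _
      have h2 := ENNReal.toReal_mono (by
        exact ENNReal.add_ne_top.mpr ⟨measure_ne_top _ _, measure_ne_top _ _⟩) h1
      rw [ENNReal.toReal_add (measure_ne_top _ _) (measure_ne_top _ _)] at h2
      exact le_trans h2 (add_le_add hDprob hTprob)
    have hcompl : stdGaussian N E = 1 - stdGaussian N (Dset ∪ Tail) :=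
      prob_compl_eq_one_sub (hDmeas.union hTmeas)
    rw [hcompl, ENNReal.toReal_sub_of_le prob_le_one ENNReal.one_ne_top]
    simp only [ENNReal.toReal_one]
    linarith
  -- assemble
  have hint_ind : ∫ a, Set.indicator E (fun _ => Real.sqrt c₁ * r / 3) a ∂(stdGaussian N)
      = (stdGaussian N E).toReal * (Real.sqrt c₁ * r / 3) := by
    rw [integral_indicator_const _ hEmeas, smul_eq_mul, measureReal_def]
  have hmono : ∫ a, Set.indicator E (fun _ => Real.sqrt c₁ * r / 3) a ∂(stdGaussian N)
      ≤ ∫ a, F a ∂(stdGaussian N) := by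
    refine integral_mono ((integrable_const _).indicator hEmeas) hFint fun a => ?_
    by_cases ha : a ∈ E
    · rw [Set.indicator_of_mem ha]; exact hEbound a ha
    · rw [Set.indicator_of_notMem ha]; exact hFnn a
  rw [hint_ind] at hmono
  refine le_trans ?_ hmono
  -- numerics
  have hsqrt2 : (141/100:ℝ) ≤ Real.sqrt 2 := by
    nlinarith [Real.sq_sqrt (show (0:ℝ) ≤ 2 by norm_num), Real.sqrt_nonneg 2]
  have hP : (3/20:ℝ) ≤ (stdGaussian N E).toReal := by
    refine le_trans ?_ hEprob
    have h2 : 1 / Real.sqrt 2 ≤ 1 / (141/100 : ℝ) :=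
      one_div_le_one_div_of_le (by norm_num) hsqrt2
    have h3 : 1 / Real.sqrt 2 + 1/9 ≤ (17/20:ℝ) := by
      refine le_trans (add_le_add_left h2 _) (by norm_num)
    linarith
  have hL : 0 ≤ Real.sqrt (Real.log m) := Real.sqrt_nonneg _
  calc Real.sqrt c₁ / 100 * Real.sqrt (Real.log m)
      ≤ (3/20:ℝ) * (Real.sqrt c₁ * (Real.sqrt (Real.log m) / 5) / 3) := by
        have hsc : 0 ≤ Real.sqrt c₁ := Real.sqrt_nonneg _
        nlinarith
    _ ≤ (stdGaussian N E).toReal * (Real.sqrt c₁ * r / 3) := by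
        rw [hrdef]
        have h0 : 0 ≤ Real.sqrt c₁ * (Real.sqrt (Real.log m) / 5) / 3 := by positivity
        exact mul_le_mul_of_nonneg_right hP h0
end
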